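/- Let G be a simple graph and let {Z₀, Z₁} be a partition of V(G). Suppose that for i = 0, 1, every vertex z ∈ Zᵢ has the property that N(z) ∩ Z_{1−i} is a clique in G. Then e(Z₀, Z₁) ≤ e(Z₀) + e(Z₁) + (|Z₀| + |Z₁|)/2, where e(Z₀, Z₁) is the number of edges of G with one end in Z₀ and one end in Z₁, and e(Zᵢ) is the number of edges of G with both ends in Zᵢ. -/

import Mathlib

open Finset

noncomputable def edgesWithin {V : Type*} (G : SimpleGraph V) (X : Set V) : ℕ :=
  {e ∈ G.edgeSet | ∀ v ∈ e, v ∈ X}.ncard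

noncomputable def edgesBetween {V : Type*} (G : SimpleGraph V) (X Y : Set V) : ℕ :=
  {e ∈ G.edgeSet | ∃ x ∈ X, ∃ y ∈ Y, e = s(x, y)}.ncard

def cg {V : Type*} (G : SimpleGraph V) (Z₀ Z₁ : Set V) : SimpleGraph V where
  Adj x y := G.Adj x y ∧ ((x ∈ Z₀ ∧ y ∈ Z₁) ∨ (x ∈ Z₁ ∧ y ∈ Z₀))
  symm := by constructor; intro x y h; exact ⟨h.1.symm, by tauto⟩
  loopless := by constructor; intro x h; exact G.loopless.irrefl x h.1

def wg {V : Type*} (G : SimpleGraph V) (X : Set V) : SimpleGraph V where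
  Adj x y := G.Adj x y ∧ x ∈ X ∧ y ∈ X
  symm := by constructor; intro x y h; exact ⟨h.1.symm, h.2.2, h.2.1⟩
  loopless := by constructor; intro x h; exact G.loopless.irrefl x h.1


lemma sum_deg_le {V : Type*} [Fintype V] (H : SimpleGraph V) [DecidableRel H.Adj] :
    ∑ v, (H.degree v : ℝ) ≤ ∑ v, (((H.neighborFinset v).sup fun u => H.degree u : ℕ) : ℝ) := by
  classical
  have hrep : ∀ g : V → V → ℝ, ∑ v, ∑ u ∈ H.neighborFinset v, g v u
      = ∑ p ∈ (univ : Finset (V × V)).filter (fun p => H.Adj p.1 p.2), g p.1 p.2 := by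
    intro g
    rw [Finset.sum_filter, Fintype.sum_prod_type]
    refine Finset.sum_congr rfl fun v _ => ?_
    rw [SimpleGraph.neighborFinset_eq_filter, Finset.sum_filter]
  have hswap : ∀ f : V → V → ℝ,
      ∑ v, ∑ u ∈ H.neighborFinset v, f v u = ∑ v, ∑ u ∈ H.neighborFinset v, f u v := by
    intro f
    rw [hrep, hrep]
    refine Finset.sum_nbij' (fun p => (p.2, p.1)) (fun p => (p.2, p.1)) ?_ ?_ ?_ ?_ ?_ <;>
      simp [SimpleGraph.adj_comm]
  have hdeg1 : ∀ v, ∑ _u ∈ H.neighborFinset v, (1 : ℝ) = (H.degree v : ℝ) := by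
    intro v; rw [Finset.sum_const, nsmul_eq_mul, mul_one]; rfl
  have hpos : ∀ {v u : V}, u ∈ H.neighborFinset v → (0:ℝ) < (H.degree v : ℝ) := by
    intro v u hu
    have : 0 < H.degree v := Finset.card_pos.mpr ⟨u, hu⟩
    exact_mod_cast this
  have key : ∑ v, (H.degree v : ℝ)
      ≤ ∑ v, ∑ u ∈ H.neighborFinset v, (H.degree u : ℝ) / (H.degree v : ℝ) := by
    have e1 : ∑ v, ∑ u ∈ H.neighborFinset v, (H.degree u : ℝ) / (H.degree v : ℝ)
        = ∑ v, ∑ u ∈ H.neighborFinset v, (H.degree v : ℝ) / (H.degree u : ℝ) :=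
      hswap (fun v u => (H.degree u : ℝ) / (H.degree v : ℝ))
    have h2 : 2 * (∑ v, (H.degree v : ℝ))
        ≤ 2 * ∑ v, ∑ u ∈ H.neighborFinset v, (H.degree u : ℝ) / (H.degree v : ℝ) := by
      calc 2 * (∑ v, (H.degree v : ℝ)) = ∑ v, ∑ _u ∈ H.neighborFinset v, (2 : ℝ) := by
            rw [Finset.mul_sum]; exact Finset.sum_congr rfl fun v _ => by
              rw [Finset.sum_const, nsmul_eq_mul]
              have := hdeg1 v
              rw [Finset.sum_const, nsmul_eq_mul, mul_one] at this
              rw [← this]; ring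
        _ ≤ ∑ v, ∑ u ∈ H.neighborFinset v,
              ((H.degree u : ℝ) / (H.degree v : ℝ) + (H.degree v : ℝ) / (H.degree u : ℝ)) := by
            refine Finset.sum_le_sum fun v _ => Finset.sum_le_sum fun u hu => ?_
            have hv : (0:ℝ) < (H.degree v : ℝ) := hpos hu
            have hu2 : v ∈ H.neighborFinset u := by
              rw [SimpleGraph.mem_neighborFinset] at hu ⊢; exact hu.symm
            have hw : (0:ℝ) < (H.degree u : ℝ) := hpos hu2
            rw [div_add_div _ _ (ne_of_gt hv) (ne_of_gt hw), le_div_iff₀ (by positivity)]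
            nlinarith [sq_nonneg ((H.degree u : ℝ) - (H.degree v : ℝ))]
        _ = 2 * ∑ v, ∑ u ∈ H.neighborFinset v, (H.degree u : ℝ) / (H.degree v : ℝ) := by
            have : ∀ v, ∑ u ∈ H.neighborFinset v,
                ((H.degree u : ℝ) / (H.degree v : ℝ) + (H.degree v : ℝ) / (H.degree u : ℝ))
                = (∑ u ∈ H.neighborFinset v, (H.degree u : ℝ) / (H.degree v : ℝ))
                  + ∑ u ∈ H.neighborFinset v, (H.degree v : ℝ) / (H.degree u : ℝ) :=
              fun v => Finset.sum_add_distrib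
            rw [Finset.sum_congr rfl fun v _ => this v, Finset.sum_add_distrib, ← e1]
            ring
    linarith
  refine key.trans (Finset.sum_le_sum fun v _ => ?_)
  rcases Finset.eq_empty_or_nonempty (H.neighborFinset v) with he | hne
  · simp [he]
  · have hv : (0:ℝ) < (H.degree v : ℝ) := hpos hne.choose_spec
    rw [← Finset.sum_div, div_le_iff₀ hv]
    calc ∑ u ∈ H.neighborFinset v, (H.degree u : ℝ)
        ≤ ∑ _u ∈ H.neighborFinset v, (((H.neighborFinset v).sup fun u => H.degree u : ℕ) : ℝ) := by
          refine Finset.sum_le_sum fun u hu => ?_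
          exact_mod_cast Finset.le_sup (f := fun u => H.degree u) hu
      _ = (((H.neighborFinset v).sup fun u => H.degree u : ℕ) : ℝ) * (H.degree v : ℝ) := by
          rw [Finset.sum_const, nsmul_eq_mul]; rw [show (H.degree v) = (H.neighborFinset v).card from rfl]
          ring

lemma cg_edgeSet {V : Type*} (G : SimpleGraph V) (Z₀ Z₁ : Set V) :
    (cg G Z₀ Z₁).edgeSet = {e ∈ G.edgeSet | ∃ x ∈ Z₀, ∃ y ∈ Z₁, e = s(x, y)} := by
  ext e
  induction e using Sym2.ind with
  | _ a b =>
    simp only [SimpleGraph.mem_edgeSet, Set.mem_setOf_eq, cg]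
    constructor
    · rintro ⟨hadj, h | h⟩
      · exact ⟨hadj, a, h.1, b, h.2, rfl⟩
      · exact ⟨hadj, b, h.2, a, h.1, Sym2.eq_swap⟩
    · rintro ⟨hadj, x, hx, y, hy, he⟩
      refine ⟨hadj, ?_⟩
      rw [Sym2.eq_iff] at he
      rcases he with ⟨rfl, rfl⟩ | ⟨rfl, rfl⟩
      · exact Or.inl ⟨hx, hy⟩
      · exact Or.inr ⟨hy, hx⟩

lemma wg_edgeSet {V : Type*} (G : SimpleGraph V) (X : Set V) :
    (wg G X).edgeSet = {e ∈ G.edgeSet | ∀ v ∈ e, v ∈ X} := by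
  ext e
  induction e using Sym2.ind with
  | _ a b =>
    simp only [SimpleGraph.mem_edgeSet, Set.mem_setOf_eq, wg, Sym2.mem_iff]
    constructor
    · rintro ⟨hadj, ha, hb⟩
      exact ⟨hadj, by rintro v (rfl | rfl) <;> assumption⟩
    · rintro ⟨hadj, h⟩
      exact ⟨hadj, h a (Or.inl rfl), h b (Or.inr rfl)⟩

theorem bipartite_like_bound {V : Type*} [Fintype V] (G : SimpleGraph V) (Z₀ Z₁ : Set V)
    (hdisj : Disjoint Z₀ Z₁) (hcover : Z₀ ∪ Z₁ = Set.univ)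
    (h₀ : ∀ z ∈ Z₀, G.IsClique (G.neighborSet z ∩ Z₁))
    (h₁ : ∀ z ∈ Z₁, G.IsClique (G.neighborSet z ∩ Z₀)) :
    (edgesBetween G Z₀ Z₁ : ℝ) ≤
      (edgesWithin G Z₀ : ℝ) + (edgesWithin G Z₁ : ℝ) + ((Z₀.ncard : ℝ) + (Z₁.ncard : ℝ)) / 2 := by
  classical
  set Gc : SimpleGraph V := cg G Z₀ Z₁ with hGcdef
  set W₀ : SimpleGraph V := wg G Z₀ with hW0def
  set W₁ : SimpleGraph V := wg G Z₁ with hW1def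
  -- edge counts
  have heb : edgesBetween G Z₀ Z₁ = Gc.edgeFinset.card := by
    rw [edgesBetween, ← cg_edgeSet, ← SimpleGraph.coe_edgeFinset, Set.ncard_coe_finset]
  have hew0 : edgesWithin G Z₀ = W₀.edgeFinset.card := by
    rw [edgesWithin, ← wg_edgeSet, ← SimpleGraph.coe_edgeFinset, Set.ncard_coe_finset]
  have hew1 : edgesWithin G Z₁ = W₁.edgeFinset.card := by
    rw [edgesWithin, ← wg_edgeSet, ← SimpleGraph.coe_edgeFinset, Set.ncard_coe_finset]
  -- vertex count
  have hn : (Z₀.ncard : ℝ) + (Z₁.ncard : ℝ) = (Fintype.card V : ℝ) := by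
    have := Set.ncard_union_eq hdisj (Set.toFinite _) (Set.toFinite _)
    rw [hcover, Set.ncard_univ, Nat.card_eq_fintype_card] at this
    exact_mod_cast this.symm
  -- degree sums
  have hsc : ∑ v, (Gc.degree v : ℝ) = 2 * (Gc.edgeFinset.card : ℝ) := by
    exact_mod_cast congrArg (Nat.cast : ℕ → ℝ) (SimpleGraph.sum_degrees_eq_twice_card_edges Gc)
  have hs0 : ∑ v, (W₀.degree v : ℝ) = 2 * (W₀.edgeFinset.card : ℝ) := by
    exact_mod_cast congrArg (Nat.cast : ℕ → ℝ) (SimpleGraph.sum_degrees_eq_twice_card_edges W₀)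
  have hs1 : ∑ v, (W₁.degree v : ℝ) = 2 * (W₁.edgeFinset.card : ℝ) := by
    exact_mod_cast congrArg (Nat.cast : ℕ → ℝ) (SimpleGraph.sum_degrees_eq_twice_card_edges W₁)
  -- key combinatorial bound
  have hkey : ∀ v : V, (((Gc.neighborFinset v).sup fun u => Gc.degree u : ℕ) : ℝ)
      ≤ (W₀.degree v : ℝ) + (W₁.degree v : ℝ) + 1 := by
    intro v
    rcases Finset.eq_empty_or_nonempty (Gc.neighborFinset v) with he | hne
    · rw [he]; simp; positivity
    · obtain ⟨u, hu, hsup⟩ := Finset.exists_mem_eq_sup _ hne fun u => Gc.degree u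
      rw [hsup]
      rw [SimpleGraph.mem_neighborFinset] at hu
      -- hu : Gc.Adj v u
      obtain ⟨hadj, hcase⟩ := hu
      have main : ∀ (A B : Set V) (W : SimpleGraph V), W = wg G A →
          ((A = Z₀ ∧ B = Z₁) ∨ (A = Z₁ ∧ B = Z₀)) →
          (∀ z ∈ B, G.IsClique (G.neighborSet z ∩ A)) →
          v ∈ A → u ∈ B → Gc.degree u ≤ W.degree v + 1 := by
        intro A B W hW hOR hclique hvA huB
        have hsub : Gc.neighborFinset u ⊆ insert v (W.neighborFinset v) := by
          intro w hw
          rw [SimpleGraph.mem_neighborFinset] at hw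
          obtain ⟨hadj', hc'⟩ := hw
          have hwA : w ∈ A := by
            rcases hOR with ⟨rfl, rfl⟩ | ⟨rfl, rfl⟩
            · rcases hc' with ⟨h1, h2⟩ | ⟨h1, h2⟩
              · exact absurd huB (Set.disjoint_left.mp hdisj h1)
              · exact h2
            · rcases hc' with ⟨h1, h2⟩ | ⟨h1, h2⟩
              · exact h2
              · exact absurd h1 (Set.disjoint_left.mp hdisj huB)
          by_cases hwv : w = v
          · rw [hwv]; exact Finset.mem_insert_self v _
          · refine Finset.mem_insert_of_mem ?_
            rw [SimpleGraph.mem_neighborFinset, hW]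
            have hvmem : v ∈ G.neighborSet u ∩ A := ⟨hadj.symm, hvA⟩
            have hwmem : w ∈ G.neighborSet u ∩ A := ⟨hadj', hwA⟩
            have := hclique u huB hvmem hwmem (fun hh => hwv (hh.symm))
            exact ⟨this, hvA, hwA⟩
        calc Gc.degree u ≤ (insert v (W.neighborFinset v)).card := Finset.card_le_card hsub
          _ ≤ W.degree v + 1 := by
              rw [SimpleGraph.degree]; exact Finset.card_insert_le _ _
      have h0deg : (0:ℝ) ≤ (W₀.degree v : ℝ) := by positivity
      have h1deg : (0:ℝ) ≤ (W₁.degree v : ℝ) := by positivity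
      rcases hcase with ⟨hv0, hu1⟩ | ⟨hv1, hu0⟩
      · have := main Z₀ Z₁ W₀ hW0def (Or.inl ⟨rfl, rfl⟩) h₁ hv0 hu1
        have := (Nat.cast_le (α := ℝ)).2 this
        push_cast at this
        linarith
      · have := main Z₁ Z₀ W₁ hW1def (Or.inr ⟨rfl, rfl⟩) h₀ hv1 hu0
        have := (Nat.cast_le (α := ℝ)).2 this
        push_cast at this
        linarith
  -- combine
  have chain : 2 * (Gc.edgeFinset.card : ℝ)
      ≤ 2 * (W₀.edgeFinset.card : ℝ) + 2 * (W₁.edgeFinset.card : ℝ) + (Fintype.card V : ℝ) := by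
    rw [← hsc, ← hs0, ← hs1]
    calc ∑ v, (Gc.degree v : ℝ)
        ≤ ∑ v, (((Gc.neighborFinset v).sup fun u => Gc.degree u : ℕ) : ℝ) := sum_deg_le Gc
      _ ≤ ∑ v, ((W₀.degree v : ℝ) + (W₁.degree v : ℝ) + 1) :=
          Finset.sum_le_sum fun v _ => hkey v
      _ = ∑ v, (W₀.degree v : ℝ) + ∑ v, (W₁.degree v : ℝ) + (Fintype.card V : ℝ) := by
          rw [Finset.sum_add_distrib, Finset.sum_add_distrib, Finset.sum_const, nsmul_eq_mul,
            mul_one, Finset.card_univ]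
  rw [heb, hew0, hew1, hn]
  linarith
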